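/- For every even integer n ≥ 2 there exists a 2-2-XOR-BN on n nodes for which the size of the minimum control node set is exactly n/2. -/

import Mathlib

namespace BN

variable {n : ℕ}

/-- The Boolean function `f` depends on input `j`. -/
def Depends (f : (Fin n → Bool) → Bool) (j : Fin n) : Prop :=
  ∃ x : Fin n → Bool, f (Function.update x j (!(x j))) ≠ f x

/-- The set of incoming nodes of node `i` (Γ⁻). -/
def inSet (F : Fin n → (Fin n → Bool) → Bool) (i : Fin n) : Set (Fin n) :=
  {j | Depends (F i) j}

/-- The set of outgoing nodes of node `i` (Γ⁺). -/
def outSet (F : Fin n → (Fin n → Bool) → Bool) (i : Fin n) : Set (Fin n) :=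
  {j | Depends (F j) i}

/-- The controlled trajectory: nodes in `U` get an xor-control signal. -/
def traj (F : Fin n → (Fin n → Bool) → Bool) (U : Finset (Fin n))
    (u : ℕ → Fin n → Bool) (x0 : Fin n → Bool) : ℕ → Fin n → Bool
  | 0 => x0
  | t + 1 => fun i =>
      if i ∈ U then Bool.xor (u t i) (F i (traj F U u x0 t))
      else F i (traj F U u x0 t)

/-- `U` is a control node set: any initial state can be driven to any target state. -/
def IsControlSet (F : Fin n → (Fin n → Bool) → Bool) (U : Finset (Fin n)) : Prop :=
  ∀ x0 xT : Fin n → Bool, ∃ t : ℕ, 1 ≤ t ∧ ∃ u : ℕ → Fin n → Bool, traj F U u x0 t = xT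

/-- XOR (parity) of the inputs in `S`. -/
def xorFun (S : Finset (Fin n)) (x : Fin n → Bool) : Bool :=
  decide ((S.filter (fun j => x j = true)).card % 2 = 1)

/-- `f` is the XOR of `k` distinct inputs, or its negation. -/
def IsKXor (k : ℕ) (f : (Fin n → Bool) → Bool) : Prop :=
  ∃ S : Finset (Fin n), S.card = k ∧ (f = xorFun S ∨ f = fun x => !(xorFun S x))

/-- A `k`-`k`-XOR-BN: each function is a `k`-input XOR (or negation) and
every node has indegree `k` and outdegree `k`. -/
def IsKKXorBN (k : ℕ) (F : Fin n → (Fin n → Bool) → Bool) : Prop :=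
  (∀ i, IsKXor k (F i)) ∧ ∀ i, (inSet F i).ncard = k ∧ (outSet F i).ncard = k

def pl (h : n % 2 = 0) (i : Fin n) : Fin n := ⟨2 * (i.val / 2), by have := i.2; omega⟩
def ph (h : n % 2 = 0) (i : Fin n) : Fin n := ⟨2 * (i.val / 2) + 1, by have := i.2; omega⟩

lemma pl_ne_ph (h : n % 2 = 0) (i : Fin n) : pl h i ≠ ph h i := by
  simp [pl, ph, Fin.ext_iff]

lemma pl_pl (h : n % 2 = 0) (i : Fin n) : pl h (pl h i) = pl h i := by
  simp [pl, Fin.ext_iff]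
lemma ph_pl (h : n % 2 = 0) (i : Fin n) : ph h (pl h i) = ph h i := by
  apply Fin.ext; show 2 * (2 * (i.val / 2) / 2) + 1 = 2 * (i.val / 2) + 1; omega
lemma pl_ph (h : n % 2 = 0) (i : Fin n) : pl h (ph h i) = pl h i := by
  apply Fin.ext; show 2 * ((2 * (i.val / 2) + 1) / 2) = 2 * (i.val / 2); omega
lemma ph_ph (h : n % 2 = 0) (i : Fin n) : ph h (ph h i) = ph h i := by
  apply Fin.ext; show 2 * ((2 * (i.val / 2) + 1) / 2) + 1 = 2 * (i.val / 2) + 1; omega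

lemma xorFun_pair {a b : Fin n} (hab : a ≠ b) (x : Fin n → Bool) :
    xorFun {a, b} x = xor (x a) (x b) := by
  unfold xorFun
  rw [Finset.filter_insert, Finset.filter_singleton]
  cases hxa : x a <;> cases hxb : x b <;>
    simp [hxa, hxb, Finset.card_insert_of_notMem, hab]

def Fd (h : n % 2 = 0) : Fin n → (Fin n → Bool) → Bool :=
  fun i => xorFun {pl h i, ph h i}

lemma Fd_eval (h : n % 2 = 0) (i : Fin n) (x : Fin n → Bool) :
    Fd h i x = xor (x (pl h i)) (x (ph h i)) := xorFun_pair (pl_ne_ph h i) x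

lemma depends_iff (h : n % 2 = 0) (i j : Fin n) :
    Depends (Fd h i) j ↔ (j = pl h i ∨ j = ph h i) := by
  constructor
  · intro ⟨x, hx⟩
    by_contra hc
    push_neg at hc
    apply hx
    rw [Fd_eval, Fd_eval, Function.update_of_ne (Ne.symm hc.1), Function.update_of_ne (Ne.symm hc.2)]
  · rintro (rfl | rfl)
    · exact ⟨fun _ => false, by
        rw [Fd_eval, Fd_eval, Function.update_self,
          Function.update_of_ne (Ne.symm (pl_ne_ph h i))]
        simp⟩
    · exact ⟨fun _ => false, by
        rw [Fd_eval, Fd_eval, Function.update_self,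
          Function.update_of_ne (pl_ne_ph h i)]
        simp⟩


lemma self_mem_pair (h : n % 2 = 0) (i : Fin n) : i = pl h i ∨ i = ph h i := by
  simp only [pl, ph, Fin.ext_iff]; omega

lemma pair_symm (h : n % 2 = 0) (i j : Fin n) :
    (i = pl h j ∨ i = ph h j) ↔ (j = pl h i ∨ j = ph h i) := by
  simp only [pl, ph, Fin.ext_iff]; omega

def evens (n : ℕ) : Finset (Fin n) := Finset.univ.filter fun i => i.val % 2 = 0

lemma pl_mem_evens (h : n % 2 = 0) (i : Fin n) : pl h i ∈ evens n := by
  simp [evens, pl]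

lemma ph_not_mem_evens (h : n % 2 = 0) (i : Fin n) : ph h i ∉ evens n := by
  simp [evens, ph]

lemma card_evens (h : n % 2 = 0) : (evens n).card = n / 2 := by
  have he : evens n = Finset.image
      (fun k : Fin (n / 2) => (⟨2 * k.val, by have := k.2; omega⟩ : Fin n)) Finset.univ := by
    ext j
    simp only [evens, Finset.mem_filter, Finset.mem_univ, true_and, Finset.mem_image,
      Fin.ext_iff]
    constructor
    · intro hj
      exact ⟨⟨j.val / 2, by have := j.2; omega⟩, by simp; omega⟩
    · rintro ⟨k, hk⟩; omega
  rw [he, Finset.card_image_of_injective _ (fun a b hab => by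
    apply Fin.ext
    have : 2 * a.val = 2 * b.val := congrArg Fin.val hab
    omega)]
  simp

lemma eq_pl_of_mem_evens (h : n % 2 = 0) {i : Fin n} (hi : i ∈ evens n) : pl h i = i := by
  simp [evens] at hi
  apply Fin.ext; show 2 * (i.val / 2) = i.val; omega

lemma eq_ph_of_not_mem_evens (h : n % 2 = 0) {i : Fin n} (hi : i ∉ evens n) : ph h i = i := by
  simp [evens] at hi
  apply Fin.ext; show 2 * (i.val / 2) + 1 = i.val; omega



lemma traj_one (h : n % 2 = 0) (U : Finset (Fin n)) (u : ℕ → Fin n → Bool)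
    (x0 : Fin n → Bool) (j : Fin n) :
    traj (Fd h) U u x0 1 j = if j ∈ U then xor (u 0 j) (Fd h j x0) else Fd h j x0 := rfl

lemma ctrl (h : n % 2 = 0) : IsControlSet (Fd h) (evens n) := by
  intro x0 xT
  refine ⟨2, by norm_num,
    fun t j => if t = 0 then xT (ph h j) else xor (xT j) (xT (ph h j)), ?_⟩
  set u : ℕ → Fin n → Bool :=
    fun t j => if t = 0 then xT (ph h j) else xor (xT j) (xT (ph h j)) with hu
  funext i
  have t1p : traj (Fd h) (evens n) u x0 1 (pl h i)
      = xor (xT (ph h i)) (xor (x0 (pl h i)) (x0 (ph h i))) := by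
    have hu0 : u 0 (pl h i) = xT (ph h i) := by rw [hu]; norm_num [ph_pl]
    rw [traj_one, if_pos (pl_mem_evens h i), Fd_eval, pl_pl, ph_pl, hu0]
  have t1q : traj (Fd h) (evens n) u x0 1 (ph h i)
      = xor (x0 (pl h i)) (x0 (ph h i)) := by
    rw [traj_one, if_neg (ph_not_mem_evens h i), Fd_eval, pl_ph, ph_ph]
  have t2 : traj (Fd h) (evens n) u x0 2 i
      = if i ∈ evens n then xor (u 1 i) (Fd h i (traj (Fd h) (evens n) u x0 1))
        else Fd h i (traj (Fd h) (evens n) u x0 1) := rfl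
  have hF : Fd h i (traj (Fd h) (evens n) u x0 1) = xT (ph h i) := by
    rw [Fd_eval, t1p, t1q]
    cases xT (ph h i) <;> cases x0 (pl h i) <;> cases x0 (ph h i) <;> rfl
  rw [t2, hF]
  by_cases hi : i ∈ evens n
  · rw [if_pos hi, hu]
    simp only [if_neg (Nat.one_ne_zero)]
    cases xT i <;> cases xT (ph h i) <;> rfl
  · rw [if_neg hi, eq_ph_of_not_mem_evens h hi]

lemma lb (h : n % 2 = 0) (U : Finset (Fin n)) (hc : IsControlSet (Fd h) U) :
    n / 2 ≤ U.card := by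
  have key : ∀ i, pl h i ∈ U ∨ ph h i ∈ U := by
    intro i
    by_contra hcon
    push_neg at hcon
    obtain ⟨hp, hq⟩ := hcon
    have eqtraj : ∀ (u : ℕ → Fin n → Bool) (x0 : Fin n → Bool) (t : ℕ),
        traj (Fd h) U u x0 (t+1) (pl h i) = traj (Fd h) U u x0 (t+1) (ph h i) := by
      intro u x0 t
      show (if pl h i ∈ U then _ else Fd h (pl h i) (traj (Fd h) U u x0 t))
          = (if ph h i ∈ U then _ else Fd h (ph h i) (traj (Fd h) U u x0 t))
      rw [if_neg hp, if_neg hq, Fd_eval, Fd_eval, pl_pl, ph_pl, pl_ph, ph_ph]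
    obtain ⟨t, ht1, u, hu⟩ :=
      hc (fun _ => false) (Function.update (fun _ => false) (pl h i) true)
    obtain ⟨t', rfl⟩ : ∃ t', t = t' + 1 := ⟨t - 1, by omega⟩
    have heq := eqtraj u (fun _ => false) t'
    rw [hu] at heq
    rw [Function.update_self, Function.update_of_ne (Ne.symm (pl_ne_ph h i))] at heq
    simp at heq
  have hsub : evens n ⊆ U.image (pl h) := by
    intro e he
    have hpe : pl h e = e := eq_pl_of_mem_evens h he
    rcases key e with hk | hk
    · rw [hpe] at hk
      exact Finset.mem_image.mpr ⟨e, hk, hpe⟩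
    · exact Finset.mem_image.mpr ⟨ph h e, hk, by rw [pl_ph, hpe]⟩
  calc n / 2 = (evens n).card := (card_evens h).symm
    _ ≤ (U.image (pl h)).card := Finset.card_le_card hsub
    _ ≤ U.card := Finset.card_image_le


/-- For every even `n ≥ 2` there exists a 2-2-XOR-BN on `n` nodes whose
minimum control node set has size exactly `n / 2`. -/
theorem stmt1 (n : ℕ) (hn : 2 ≤ n) (hne : Even n) :
    ∃ F : Fin n → (Fin n → Bool) → Bool, IsKKXorBN 2 F ∧
      (∃ U : Finset (Fin n), IsControlSet F U ∧ U.card = n / 2) ∧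
      ∀ U : Finset (Fin n), IsControlSet F U → n / 2 ≤ U.card := by
  have h : n % 2 = 0 := Nat.even_iff.mp hne
  refine ⟨Fd h, ⟨?_, ?_⟩, ⟨evens n, ctrl h, card_evens h⟩, fun U hU => lb h U hU⟩
  · intro i
    exact ⟨{pl h i, ph h i}, Finset.card_pair (pl_ne_ph h i), Or.inl rfl⟩
  · intro i
    have hin : inSet (Fd h) i = {pl h i, ph h i} :=
      Set.ext fun j => depends_iff h i j
    have hout : outSet (Fd h) i = {pl h i, ph h i} := by
      apply Set.ext
      intro j
      show Depends (Fd h j) i ↔ _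
      rw [depends_iff h j i, pair_symm h i j]
      simp
    rw [hin, hout]
    constructor <;> exact Set.ncard_pair (pl_ne_ph h i)


end BN
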